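/- Let E(P) := ∫_Ω φ(x, P(x) + ∇f(x)) dx on (L¹(Ω))ⁿ. If V ∈ (L^∞(Ω))ⁿ satisfies φ⁰(x,V(x)) > 1 on a set of positive Lebesgue measure in Ω, then E*(V) = +∞. -/

import Mathlib

open MeasureTheory
open scoped RealInnerProductSpace ENNReal Topology

noncomputable section

abbrev Euc (n : ℕ) := EuclideanSpace ℝ (Fin n)

/-- `φ x` is a norm on `ℝⁿ`. -/
def IsNormAt {n : ℕ} (φ : Euc n → Euc n → ℝ) (x : Euc n) : Prop :=
  (∀ ξ, 0 ≤ φ x ξ) ∧ (∀ ξ, φ x ξ = 0 ↔ ξ = 0) ∧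
  (∀ (c : ℝ) (ξ), φ x (c • ξ) = |c| * φ x ξ) ∧
  (∀ ξ η, φ x (ξ + η) ≤ φ x ξ + φ x η)

/-- The dual norm `φ⁰(x,ξ) = sup {ξ·p : φ(x,p) ≤ 1}`. -/
def dualNorm {n : ℕ} (φ : Euc n → Euc n → ℝ) (x ξ : Euc n) : ℝ :=
  sSup {r | ∃ p : Euc n, φ x p ≤ 1 ∧ r = ⟪ξ, p⟫}
set_option maxHeartbeats 1000000 in
/-- If `φ⁰(x,V(x)) > 1` on a set of positive measure in `Ω`, then `E*(V) = +∞`,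
i.e. the values `⟨V,P⟩ - E(P)` are unbounded above. -/
theorem stmt5 {n : ℕ} (Ω : Set (Euc n)) (hΩo : IsOpen Ω) (hΩb : Bornology.IsBounded Ω)
    (φ : Euc n → Euc n → ℝ) (α : ℝ) (hα : 0 < α)
    (hφc : ContinuousOn (fun q : Euc n × Euc n => φ q.1 q.2) (Ω ×ˢ Set.univ))
    (hnorm : ∀ x ∈ Ω, IsNormAt φ x)
    (hbound : ∀ x ∈ Ω, ∀ ξ, φ x ξ ≤ α * ‖ξ‖)
    (f : Euc n → ℝ) (gradf : Euc n → Euc n)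
    (hf : ∀ x, HasGradientAt f (gradf x) x) (hsupp : HasCompactSupport f)
    (hfint : Integrable gradf (volume.restrict Ω))
    (V : Euc n → Euc n) (hVm : Measurable V) (C : ℝ) (hVb : ∀ x, ‖V x‖ ≤ C)
    (ω : Set (Euc n)) (hωm : MeasurableSet ω) (hωΩ : ω ⊆ Ω) (hωpos : 0 < volume ω)
    (hbig : ∀ x ∈ ω, 1 < dualNorm φ x (V x)) :
    ∀ M : ℝ, ∃ P : Euc n → Euc n, Integrable P (volume.restrict Ω) ∧
      Integrable (fun x => φ x (P x + gradf x)) (volume.restrict Ω) ∧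
      M < (∫ x in Ω, ⟪V x, P x⟫) - ∫ x in Ω, φ x (P x + gradf x) := by
  intro M
  classical
  have hC0 : 0 ≤ C := le_trans (norm_nonneg _) (hVb 0)
  set D : ℕ → Euc n := TopologicalSpace.denseSeq (Euc n) with hD
  have hDdense : DenseRange D := TopologicalSpace.denseRange_denseSeq _
  have hφcont : ∀ p : Euc n, ContinuousOn (fun x => φ x p) Ω := fun p =>
    hφc.comp (continuous_id.prodMk continuous_const).continuousOn (fun x hx => ⟨hx, trivial⟩)
  -- cover sets
  set A : ℕ × ℕ × ℚ → Set (Euc n) := fun i =>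
    ((Ω ∩ {x | φ x (D i.1) < (i.2.2 : ℝ)}) ∩
      {x | (i.2.2 : ℝ) + ((i.2.1 : ℝ) + 1)⁻¹ < ⟪V x, D i.1⟫}) ∩ ω with hA
  have hAmeas : ∀ i, MeasurableSet (A i) := by
    intro i
    refine ((((hφcont (D i.1)).isOpen_inter_preimage hΩo isOpen_Iio).measurableSet.inter
      ?_).inter hωm)
    exact measurableSet_lt measurable_const (hVm.inner measurable_const)
  -- coverage
  have hcover : ω ⊆ ⋃ i, A i := by
    intro x hx
    have hxΩ : x ∈ Ω := hωΩ hx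
    obtain ⟨hn0, _, hns, hnt⟩ := hnorm x hxΩ
    -- extract p from the dual norm sup
    obtain ⟨p, hp1, hp2⟩ : ∃ p : Euc n, φ x p ≤ 1 ∧ 1 < ⟪V x, p⟫ := by
      have h1 := hbig x hx
      set S := {r | ∃ p : Euc n, φ x p ≤ 1 ∧ r = ⟪V x, p⟫} with hS
      have hne : S.Nonempty := by
        by_contra h
        rw [Set.not_nonempty_iff_eq_empty] at h
        rw [dualNorm] at h1
        rw [show {r | ∃ p : Euc n, φ x p ≤ 1 ∧ r = ⟪V x, p⟫} = S from rfl, h,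
          Real.sSup_empty] at h1
        linarith
      obtain ⟨r, hrS, hr⟩ := exists_lt_of_lt_csSup hne h1
      obtain ⟨p, hp, rfl⟩ := hrS
      exact ⟨p, hp, hr⟩
    set g : ℝ := ⟪V x, p⟫ - 1 with hgdef
    have hg : 0 < g := by rw [hgdef]; linarith
    set ε : ℝ := g / (4 * (C + α + 1)) with hε
    have hεpos : 0 < ε := by
      apply div_pos hg; nlinarith
    obtain ⟨j, hj⟩ := hDdense.exists_dist_lt p hεpos
    set q : Euc n := D j with hq
    have hqp : ‖q - p‖ < ε := by
      rw [← dist_eq_norm, dist_comm]; exact hj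
    have hφq : φ x q ≤ 1 + α * ε := by
      have h1 : φ x q ≤ φ x p + φ x (q - p) := by
        have := hnt p (q - p); rwa [add_sub_cancel] at this
      have h2 : φ x (q - p) ≤ α * ‖q - p‖ := hbound x hxΩ _
      have h3 : α * ‖q - p‖ ≤ α * ε := by
        exact mul_le_mul_of_nonneg_left hqp.le hα.le
      linarith
    have hVq : 1 + g - C * ε ≤ ⟪V x, q⟫ := by
      have h1 : ⟪V x, q⟫ = ⟪V x, p⟫ + ⟪V x, q - p⟫ := by
        rw [← inner_add_right]; rw [add_sub_cancel]
      have h2 : |⟪V x, q - p⟫| ≤ ‖V x‖ * ‖q - p‖ := abs_real_inner_le_norm _ _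
      have h3 : ‖V x‖ * ‖q - p‖ ≤ C * ε :=
        mul_le_mul (hVb x) hqp.le (norm_nonneg _) hC0
      have h4 : -(C*ε) ≤ ⟪V x, q - p⟫ := by
        have := (abs_le.mp (h2.trans h3)).1; linarith
      rw [h1, hgdef]; linarith
    have hgap : g / 2 < ⟪V x, q⟫ - φ x q := by
      have h5 : (C + α) * ε ≤ g / 4 := by
        rw [hε, ← mul_div_assoc,
          div_le_div_iff₀ (by nlinarith) (by norm_num : (0:ℝ) < 4)]
        nlinarith
      nlinarith
    obtain ⟨k, hk⟩ := exists_nat_one_div_lt (by linarith : (0:ℝ) < g/2)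
    rw [one_div] at hk
    have hklt : φ x q < ⟪V x, q⟫ - ((k:ℝ)+1)⁻¹ := by
      have : (0:ℝ) < ((k:ℝ)+1)⁻¹ := by positivity
      linarith
    obtain ⟨m, hm1, hm2⟩ := exists_rat_btwn hklt
    refine Set.mem_iUnion.mpr ⟨(j, k, m), ⟨⟨⟨hxΩ, hm1⟩, ?_⟩, hx⟩⟩
    simp only [Set.mem_setOf_eq]
    linarith
  -- positive measure piece
  obtain ⟨i, hi⟩ : ∃ i, volume (A i) ≠ 0 := by
    by_contra h
    push_neg at h
    have h1 : volume ω ≤ ∑' i, volume (A i) :=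
      (measure_mono hcover).trans (measure_iUnion_le A)
    rw [ENNReal.tsum_eq_zero.mpr h] at h1
    exact absurd (le_antisymm h1 bot_le) hωpos.ne'
  set T : Set (Euc n) := A i with hTdef
  set q : Euc n := D i.1 with hq
  set c : ℝ := ((i.2.1 : ℝ) + 1)⁻¹ with hc
  have hcpos : 0 < c := by positivity
  have hT : MeasurableSet T := hAmeas i
  have hTω : T ⊆ ω := fun x hx => hx.2
  have hTΩ : T ⊆ Ω := fun x hx => hx.1.1.1
  have hTgap : ∀ x ∈ T, c ≤ ⟪V x, q⟫ - φ x q := by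
    intro x hx
    have h1 : φ x q < (i.2.2 : ℝ) := hx.1.1.2
    have h2 : (i.2.2 : ℝ) + c < ⟪V x, q⟫ := hx.1.2
    linarith
  have hTfin : volume T ≠ ⊤ :=
    ((measure_mono hTΩ).trans_lt hΩb.measure_lt_top).ne
  set μT : ℝ := (volume T).toReal with hμT
  have hμTpos : 0 < μT := ENNReal.toReal_pos hi hTfin
  set K : ℝ := α * ∫ x in Ω, ‖gradf x‖ with hK
  set t : ℝ := max 1 ((M + K + 1) / (c * μT)) with ht
  have ht0 : 0 < t := lt_of_lt_of_le one_pos (le_max_left _ _)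
  have htc : M + K + 1 ≤ t * (c * μT) := by
    rw [← div_le_iff₀ (by positivity)]
    exact le_max_right _ _
  -- the competitor
  set P : Euc n → Euc n := T.indicator (fun _ => t • q) with hP
  have hPmeas : Measurable P := measurable_const.indicator hT
  have hTres : (volume.restrict Ω) T = volume T := by
    rw [Measure.restrict_apply hT, Set.inter_eq_self_of_subset_left hTΩ]
  have hPint : Integrable P (volume.restrict Ω) := by
    rw [hP, integrable_indicator_iff hT]
    refine integrableOn_const (ne_of_lt ?_)
    rw [Measure.restrict_apply hT, Set.inter_eq_self_of_subset_left hTΩ]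
    exact hTfin.lt_top
  -- pointwise rewriting of the inner product
  have hinner : ∀ x, ⟪V x, P x⟫ = T.indicator (fun x => t * ⟪V x, q⟫) x := by
    intro x
    by_cases hx : x ∈ T
    · rw [hP, Set.indicator_of_mem hx, Set.indicator_of_mem hx]
      exact real_inner_smul_right _ _ _
    · simp [hP, Set.indicator_of_notMem hx]
  -- integrability of φ composite
  have hPg : Integrable (fun x => P x + gradf x) (volume.restrict Ω) := hPint.add hfint
  have hφint : Integrable (fun x => φ x (P x + gradf x)) (volume.restrict Ω) := by
    have hmap : AEMeasurable (fun x => (x, P x + gradf x)) (volume.restrict Ω) :=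
      aemeasurable_id.prodMk (hPmeas.aemeasurable.add hfint.aemeasurable)
    have hmem : ∀ᵐ x ∂(volume.restrict Ω), (x, P x + gradf x) ∈ Ω ×ˢ (Set.univ : Set (Euc n)) := by
      filter_upwards [ae_restrict_mem hΩo.measurableSet] with x hx
      exact ⟨hx, trivial⟩
    have hASM : AEMeasurable (fun x => φ x (P x + gradf x)) (volume.restrict Ω) := by
      have hmem' : ∀ᵐ p ∂((volume.restrict Ω).map (fun x => (x, P x + gradf x))),
          p ∈ Ω ×ˢ (Set.univ : Set (Euc n)) :=
        (ae_map_iff hmap (hΩo.measurableSet.prod MeasurableSet.univ)).2 hmem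
      have h1 : AEMeasurable (fun p : Euc n × Euc n => φ p.1 p.2)
          ((volume.restrict Ω).map (fun x => (x, P x + gradf x))) := by
        have h2 := hφc.aemeasurable
          (μ := (volume.restrict Ω).map (fun x => (x, P x + gradf x)))
          (hΩo.measurableSet.prod MeasurableSet.univ)
        rwa [Measure.restrict_eq_self_of_ae_mem hmem'] at h2
      exact h1.comp_aemeasurable hmap
    refine Integrable.mono' ((hPg.norm.const_mul α)) hASM.aestronglyMeasurable ?_
    filter_upwards [ae_restrict_mem hΩo.measurableSet] with x hx
    rw [Real.norm_eq_abs, abs_of_nonneg ((hnorm x hx).1 _)]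
    exact hbound x hx _
  refine ⟨P, hPint, hφint, ?_⟩
  have hres : (volume.restrict Ω).restrict T = volume.restrict T := by
    rw [Measure.restrict_restrict hT, Set.inter_eq_self_of_subset_left hTΩ]
  -- integrability of t * ⟪V x, q⟫ on T
  have hVqmeas : Measurable (fun x => t * ⟪V x, q⟫) := (hVm.inner measurable_const).const_mul t
  have hVqTint : IntegrableOn (fun x => t * ⟪V x, q⟫) T volume := by
    refine Integrable.mono' (g := fun _ => t * (C * ‖q‖))
      (integrableOn_const hTfin) hVqmeas.aestronglyMeasurable
      (ae_of_all _ fun x => ?_)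
    rw [Real.norm_eq_abs, abs_mul, abs_of_pos ht0]
    exact mul_le_mul_of_nonneg_left ((abs_real_inner_le_norm _ _).trans
      (mul_le_mul_of_nonneg_right (hVb x) (norm_nonneg _))) ht0.le
  -- integrability of t * φ x q on T
  have hφqTint : IntegrableOn (fun x => t * φ x q) T volume := by
    refine Integrable.mono' (g := fun _ => t * (α * ‖q‖))
      (integrableOn_const hTfin)
      ((((hφcont q).mono hTΩ).aestronglyMeasurable hT).const_mul t) ?_
    filter_upwards [ae_restrict_mem hT] with x hx
    rw [Real.norm_eq_abs, abs_mul, abs_of_pos ht0,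
      abs_of_nonneg ((hnorm x (hTΩ hx)).1 _)]
    exact mul_le_mul_of_nonneg_left (hbound x (hTΩ hx) _) ht0.le
  -- integrability of the inner product term on Ω
  have hVPint : Integrable (fun x => ⟪V x, P x⟫) (volume.restrict Ω) := by
    have h1 : Integrable (T.indicator (fun x => t * ⟪V x, q⟫)) (volume.restrict Ω) := by
      rw [integrable_indicator_iff hT, IntegrableOn, hres]
      exact hVqTint
    exact h1.congr (ae_of_all _ fun x => (hinner x).symm)
  have hindint : Integrable (T.indicator (fun x => t * φ x q)) (volume.restrict Ω) := by
    rw [integrable_indicator_iff hT, IntegrableOn, hres]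
    exact hφqTint
  have hgradnorm : Integrable (fun x => α * ‖gradf x‖) (volume.restrict Ω) :=
    hfint.norm.const_mul α
  -- I1
  have hI1 : (∫ x in Ω, ⟪V x, P x⟫) = ∫ x in T, t * ⟪V x, q⟫ := by
    calc ∫ x in Ω, ⟪V x, P x⟫ = ∫ x in Ω, T.indicator (fun x => t * ⟪V x, q⟫) x :=
          integral_congr_ae (ae_of_all _ hinner)
      _ = ∫ x in Ω ∩ T, t * ⟪V x, q⟫ := setIntegral_indicator hT
      _ = ∫ x in T, t * ⟪V x, q⟫ := by rw [Set.inter_eq_self_of_subset_right hTΩ]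
  -- I2 bound
  have hI2 : (∫ x in Ω, φ x (P x + gradf x)) ≤ (∫ x in T, t * φ x q) + K := by
    have hptwise : ∀ᵐ x ∂(volume.restrict Ω),
        φ x (P x + gradf x) ≤ T.indicator (fun x => t * φ x q) x + α * ‖gradf x‖ := by
      filter_upwards [ae_restrict_mem hΩo.measurableSet] with x hx
      obtain ⟨hn0, _, hns, hnt⟩ := hnorm x hx
      by_cases hxT : x ∈ T
      · rw [Set.indicator_of_mem hxT]
        have h1 : φ x (P x + gradf x) ≤ φ x (P x) + φ x (gradf x) := hnt _ _
        have h2 : φ x (P x) = t * φ x q := by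
          rw [hP, Set.indicator_of_mem hxT, hns, abs_of_pos ht0]
        have h3 : φ x (gradf x) ≤ α * ‖gradf x‖ := hbound x hx _
        linarith
      · rw [Set.indicator_of_notMem hxT]
        have h2 : P x = 0 := by rw [hP, Set.indicator_of_notMem hxT]
        have h3 : φ x (P x + gradf x) ≤ α * ‖gradf x‖ := by
          rw [h2, zero_add]; exact hbound x hx _
        linarith
    calc ∫ x in Ω, φ x (P x + gradf x)
        ≤ ∫ x in Ω, (T.indicator (fun x => t * φ x q) x + α * ‖gradf x‖) :=
          integral_mono_ae hφint (hindint.add hgradnorm) hptwise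
      _ = (∫ x in Ω, T.indicator (fun x => t * φ x q) x) + ∫ x in Ω, α * ‖gradf x‖ :=
          integral_add hindint hgradnorm
      _ = (∫ x in T, t * φ x q) + K := by
          rw [setIntegral_indicator hT, Set.inter_eq_self_of_subset_right hTΩ]
          congr 1
          rw [hK, integral_const_mul]
  -- lower bound on the difference on T
  have hsub : (∫ x in T, t * ⟪V x, q⟫) - ∫ x in T, t * φ x q
      = ∫ x in T, (t * ⟪V x, q⟫ - t * φ x q) := (integral_sub hVqTint hφqTint).symm
  have hge : t * c * μT ≤ ∫ x in T, (t * ⟪V x, q⟫ - t * φ x q) := by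
    refine le_trans (le_of_eq ?_)
      (setIntegral_ge_of_const_le (c := t * c) hT hTfin (fun x hx => ?_) (hVqTint.sub hφqTint))
    · rw [smul_eq_mul, Measure.real, hμT]; ring
    nlinarith [hTgap x hx, ht0]
  rw [← mul_assoc] at htc
  rw [hI1]
  linarith [hsub, hge, htc, hI2]
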